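/- arXiv:0808.0149 — 6 statements merged into one kernel-verified Lean document; each statement's English description precedes it below -/
import Mathlib

section
/- Let R be a commutative ring and n a positive natural number. Every R-linear derivation D on the matrix ring M_n(R) (where R acts via scalar matrices, i.e., D(λ·x) = λ·D(x) for all λ ∈ R, x ∈ M_n(R)) is inner: there exists a ∈ M_n(R) such that D(x) = ax − xa for all x ∈ M_n(R). (This is the instance of the paper's Theorem 2.1 for a homogeneous type I_n von Neumann algebra, whose algebra of locally measurable operators is the matrix algebra over its commutative center.) -/
/-- every `R`-linear derivation on the matrix ring `M_n(R)` over a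
commutative ring `R` (with `R` acting via scalar matrices) is inner. -/
theorem linear_derivation_on_matrix_ring_is_inner {R : Type*} [CommRing R]
    (n : ℕ) (hn : 0 < n)
    (D : Matrix (Fin n) (Fin n) R → Matrix (Fin n) (Fin n) R)
    (hadd : ∀ x y : Matrix (Fin n) (Fin n) R, D (x + y) = D x + D y)
    (hleib : ∀ x y : Matrix (Fin n) (Fin n) R, D (x * y) = D x * y + x * D y)
    (hlin : ∀ (lam : R) (x : Matrix (Fin n) (Fin n) R), D (lam • x) = lam • D x) :
    ∃ a : Matrix (Fin n) (Fin n) R, ∀ x : Matrix (Fin n) (Fin n) R,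
      D x = a * x - x * a := by
  classical
  let z : Fin n := ⟨0, hn⟩
  let E : Fin n → Fin n → Matrix (Fin n) (Fin n) R :=
    fun i j => Matrix.single i j 1
  have hE_same : ∀ i j l : Fin n, E i j * E j l = E i l := by
    intro i j l
    simp [E]
  have hE_ne : ∀ (i j k l : Fin n), j ≠ k → E i j * E k l = 0 := by
    intro i j k l h
    exact Matrix.single_mul_single_of_ne (c := 1) i j k h 1
  have hone : (∑ k, E k k) = (1 : Matrix (Fin n) (Fin n) R) := by
    ext i j
    simp only [Matrix.sum_apply, Matrix.one_apply, E, Matrix.single, Matrix.of_apply]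
    rw [Finset.sum_eq_single i] <;> simp +contextual [eq_comm]
  have hD0 : D 0 = 0 := by
    have := (hadd 0 0).symm
    simpa using this
  have hDsum : ∀ (s : Finset (Fin n)) (f : Fin n → Matrix (Fin n) (Fin n) R),
      D (∑ i ∈ s, f i) = ∑ i ∈ s, D (f i) := fun s f =>
    map_sum (AddMonoidHom.mk' D hadd) f s
  -- the implementing element
  set a : Matrix (Fin n) (Fin n) R := ∑ k, D (E k z) * E z k with ha
  -- D(E z z) sandwiched vanishes
  have h1 : E z z * E z z = E z z := hE_same z z z
  have hzz : E z z * D (E z z) * E z z = 0 := by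
    have h2 := hleib (E z z) (E z z)
    rw [h1] at h2
    have h3 : E z z * D (E z z) * E z z
        = E z z * (D (E z z) * E z z + E z z * D (E z z)) * E z z := by
      rw [← h2]
    have h4 : E z z * (D (E z z) * E z z + E z z * D (E z z)) * E z z
        = E z z * D (E z z) * E z z + E z z * D (E z z) * E z z := by
      rw [mul_add, add_mul]
      congr 1
      · rw [mul_assoc, mul_assoc, h1, ← mul_assoc]
      · rw [← mul_assoc, h1]
    rw [h4] at h3
    exact (add_eq_left.mp h3.symm)
  -- computation of a * E i j
  have lemA : ∀ i j : Fin n, a * E i j = D (E i z) * E z j := by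
    intro i j
    rw [ha, Finset.sum_mul]
    rw [Finset.sum_eq_single i]
    · rw [mul_assoc, hE_same]
    · intro k _ hk
      rw [mul_assoc, hE_ne z k i j hk, mul_zero]
    · simp
  -- key relation : E z j * D (E k z)
  have hrel : ∀ j k : Fin n, E z j * D (E k z)
      = (if j = k then D (E z z) else 0) - D (E z j) * E k z := by
    intro j k
    by_cases h : j = k
    · subst h
      have h2 := hleib (E z j) (E j z)
      rw [hE_same] at h2
      rw [if_pos rfl]
      rw [h2]; noncomm_ring
    · have h2 := hleib (E z j) (E k z)
      rw [hE_ne z j k z h, hD0] at h2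
      rw [if_neg h]
      have h3 : E z j * D (E k z) = - (D (E z j) * E k z) := by
        rw [eq_neg_iff_add_eq_zero, add_comm]
        exact h2.symm
      rw [h3]; noncomm_ring
  -- computation of E i j * a
  have lemB : ∀ i j : Fin n, E i j * a = - (E i z * D (E z j)) := by
    intro i j
    have hEij : E i j = E i z * E z j := (hE_same i z j).symm
    rw [ha, Finset.mul_sum]
    have step : ∀ k : Fin n, E i j * (D (E k z) * E z k)
        = (if j = k then E i z * D (E z z) * E z k else 0)
          - E i z * D (E z j) * (E k z * E z k) := by
      intro k
      rw [hEij, mul_assoc, ← mul_assoc (E z j), hrel j k]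
      by_cases h : j = k
      · subst h
        simp only [if_pos rfl]
        noncomm_ring; abel
      · simp only [if_neg h]
        noncomm_ring
    rw [Finset.sum_congr rfl (fun k _ => step k), Finset.sum_sub_distrib]
    have s1 : (∑ k, if j = k then E i z * D (E z z) * E z k else 0)
        = E i z * D (E z z) * E z j := by
      rw [Finset.sum_eq_single j] <;> simp +contextual [eq_comm]
    have s2 : (∑ k, E i z * D (E z j) * (E k z * E z k))
        = E i z * D (E z j) := by
      rw [← Finset.mul_sum]
      have hs : (∑ k, E k z * E z k) = (1 : Matrix (Fin n) (Fin n) R) := by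
        rw [Finset.sum_congr rfl (fun k _ => hE_same k z k)]
        exact hone
      rw [hs, mul_one]
    rw [s1, s2]
    have hzero : E i z * D (E z z) * E z j = 0 := by
      have e1 : E i z = E i z * E z z := (hE_same i z z).symm
      have e2 : E z j = E z z * E z j := (hE_same z z j).symm
      calc E i z * D (E z z) * E z j
          = E i z * (E z z * D (E z z) * E z z) * E z j := by
            conv_lhs => rw [e1, e2]
            noncomm_ring
        _ = 0 := by rw [hzz]; simp
    rw [hzero]; noncomm_ring
  -- D on basis matrices
  have key : ∀ i j : Fin n, D (E i j) = a * E i j - E i j * a := by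
    intro i j
    have hEij : E i j = E i z * E z j := (hE_same i z j).symm
    rw [lemA, lemB, sub_neg_eq_add]
    calc D (E i j) = D (E i z * E z j) := by rw [← hEij]
      _ = D (E i z) * E z j + E i z * D (E z j) := hleib _ _
  refine ⟨a, fun x => ?_⟩
  have hx : x = ∑ i, ∑ j, x i j • E i j := by
    conv_lhs => rw [Matrix.matrix_eq_sum_single x]
    refine Finset.sum_congr rfl fun i _ => Finset.sum_congr rfl fun j _ => ?_
    rw [Matrix.smul_single, smul_eq_mul, mul_one]
  calc D x = ∑ i, ∑ j, x i j • D (E i j) := by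
        conv_lhs => rw [hx]
        rw [hDsum]
        refine Finset.sum_congr rfl fun i _ => ?_
        rw [hDsum]
        exact Finset.sum_congr rfl fun j _ => hlin _ _
    _ = ∑ i, ∑ j, (a * (x i j • E i j) - (x i j • E i j) * a) := by
        refine Finset.sum_congr rfl fun i _ => Finset.sum_congr rfl fun j _ => ?_
        rw [key, smul_sub, mul_smul_comm, smul_mul_assoc]
    _ = a * x - x * a := by
        conv_rhs => rw [hx]
        rw [Finset.mul_sum, Finset.sum_mul, ← Finset.sum_sub_distrib]
        refine Finset.sum_congr rfl fun i _ => ?_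
        rw [Finset.mul_sum, Finset.sum_mul, ← Finset.sum_sub_distrib]
end

section
/- Let (Ω, Σ, μ) be a σ-finite measure space, n a positive natural number, and let D be a ℂ-linear derivation on the matrix algebra M_n(L^0(Ω)) (which is *-isomorphic to the algebra LS(M) = S(M) of locally measurable operators for a homogeneous type I_n von Neumann algebra M with center L^∞(Ω)). Then D admits a representation D = D_a + D_δ, where D_a(x) = ax − xa is the inner derivation implemented by some a ∈ M_n(L^0(Ω)) and D_δ is the entrywise derivation induced by a ℂ-linear derivation δ on L^0(Ω); moreover this representation is unique in the sense that δ is uniquely determined by D and the map D_a is uniquely determined by D. -/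
open MeasureTheory

/-- The entrywise map on `n × n` matrices induced by a map `δ : R → R`. -/
def matrixEntrywise {R : Type*} (n : ℕ) (δ : R → R) :
    Matrix (Fin n) (Fin n) R → Matrix (Fin n) (Fin n) R :=
  fun x => Matrix.of fun i j => δ (x i j)

section Aux

open Matrix

variable {R : Type*} [CommRing R] [Module ℂ R] [SMulCommClass ℂ R R] [IsScalarTower ℂ R R]

theorem matrixDerivAux_decomp {n : ℕ} (hn : 0 < n)
    (D : Matrix (Fin n) (Fin n) R → Matrix (Fin n) (Fin n) R)
    (Dadd : ∀ x y, D (x + y) = D x + D y)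
    (Dsmul : ∀ (c : ℂ) (x), D (c • x) = c • D x)
    (Dleib : ∀ x y, D (x * y) = D x * y + x * D y) :
    ∃ (a : Matrix (Fin n) (Fin n) R) (δ : R → R),
      (∀ f g, δ (f + g) = δ f + δ g) ∧
      (∀ (c : ℂ) (f), δ (c • f) = c • δ f) ∧
      (∀ f g, δ (f * g) = δ f * g + f * δ g) ∧
      (∀ x, D x = (a * x - x * a) + matrixEntrywise n δ x) ∧
      (∀ (a' : Matrix (Fin n) (Fin n) R) (δ' : R → R),
        (∀ f g, δ' (f + g) = δ' f + δ' g) →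
        (∀ (c : ℂ) (f), δ' (c • f) = c • δ' f) →
        (∀ f g, δ' (f * g) = δ' f * g + f * δ' g) →
        (∀ x, D x = (a' * x - x * a') + matrixEntrywise n δ' x) →
        δ' = δ ∧ ∀ x, a' * x - x * a' = a * x - x * a) := by
  classical
  set z : Fin n := ⟨0, hn⟩ with hzdef
  have D0 : D 0 = 0 := by
    have h := Dadd 0 0
    rw [add_zero] at h
    have h2 : D 0 + 0 = D 0 + D 0 := by rw [add_zero]; exact h
    exact (add_left_cancel h2).symm
  -- matrix units
  set E : Fin n → Fin n → Matrix (Fin n) (Fin n) R :=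
    fun i j => single i j 1 with hE
  have EE : ∀ i j k l : Fin n, E i j * E k l = if j = k then E i l else 0 := by
    intro i j k l
    by_cases h : j = k
    · subst h; simp [hE]
    · simp [hE, h]
  have rel : ∀ i j k l : Fin n,
      D (E i j) * E k l + E i j * D (E k l) = if j = k then D (E i l) else 0 := by
    intro i j k l
    rw [← Dleib, EE]
    split <;> simp [D0]
  have sumId : (∑ k : Fin n, E k k) = (1 : Matrix (Fin n) (Fin n) R) := by
    ext i j
    simp only [hE, Matrix.sum_apply, Matrix.one_apply, single, Matrix.of_apply]
    by_cases h : i = j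
    · subst h; simp
    · simp [h, fun k => show ¬(k = i ∧ k = j) from fun ⟨h1, h2⟩ => h (h1 ▸ h2)]
  set a : Matrix (Fin n) (Fin n) R := ∑ k : Fin n, D (E k z) * E z k with ha
  have key : ∀ p q : Fin n, a * E p q - E p q * a = D (E p q) := by
    intro p q
    have h1 : a * E p q = D (E p z) * E z q := by
      calc a * E p q = ∑ k : Fin n, D (E k z) * E z k * E p q := by rw [ha, Finset.sum_mul]
        _ = ∑ k : Fin n, if k = p then D (E k z) * E z q else 0 := by
            refine Finset.sum_congr rfl fun k _ => ?_
            rw [mul_assoc, EE]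
            split <;> simp
        _ = D (E p z) * E z q := by simp
    have h2 : E p q * a = E p z * D (E z z) * E z q - E p z * D (E z q) := by
      have hterm : ∀ k : Fin n, E p q * (D (E k z) * E z k) =
          (if q = k then E p z * D (E z z) * E z k else 0)
            - E p z * D (E z q) * E k k := by
        intro k
        have hq : E z q * D (E k z) = (if q = k then D (E z z) else 0) - D (E z q) * E k z :=
          eq_sub_of_add_eq' (rel z q k z)
        have hpq : E p z * E z q = E p q := by rw [EE]; simp
        have hkk : E k z * E z k = E k k := by rw [EE]; simp
        calc E p q * (D (E k z) * E z k)
            = E p z * (E z q * D (E k z)) * E z k := by rw [← hpq]; noncomm_ring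
          _ = E p z * ((if q = k then D (E z z) else 0) - D (E z q) * E k z) * E z k := by
              rw [hq]
          _ = (if q = k then E p z * D (E z z) * E z k else 0)
                - E p z * D (E z q) * (E k z * E z k) := by
              by_cases hqk : q = k
              · simp only [if_pos hqk]
                noncomm_ring
              · simp only [if_neg hqk]
                noncomm_ring
          _ = _ := by rw [hkk]
      calc E p q * a = ∑ k : Fin n, E p q * (D (E k z) * E z k) := by
            rw [ha, Finset.mul_sum]
        _ = ∑ k : Fin n, ((if q = k then E p z * D (E z z) * E z k else 0)
              - E p z * D (E z q) * E k k) := Finset.sum_congr rfl fun k _ => hterm k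
        _ = (∑ k : Fin n, if q = k then E p z * D (E z z) * E z k else 0)
              - ∑ k : Fin n, E p z * D (E z q) * E k k := Finset.sum_sub_distrib _ _
        _ = E p z * D (E z z) * E z q - E p z * D (E z q) := by
            rw [Finset.sum_ite_eq, ← Finset.mul_sum, sumId]
            simp
    have hzero : E p z * D (E z z) * E z q = 0 := by
      have hr := rel z z z z
      rw [if_pos rfl] at hr
      have hzz : E z z * E z z = E z z := by rw [EE]; simp
      have hX : E z z * D (E z z) * E z z = 0 := by
        have h3 : E z z * (D (E z z) * E z z + E z z * D (E z z)) * E z z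
            = E z z * D (E z z) * E z z := by rw [hr]
        have h4 : E z z * (D (E z z) * E z z + E z z * D (E z z)) * E z z
            = E z z * D (E z z) * (E z z * E z z) + E z z * E z z * D (E z z) * E z z := by
          noncomm_ring
        rw [hzz] at h4
        have h5 : E z z * D (E z z) * E z z + E z z * D (E z z) * E z z
            = E z z * D (E z z) * E z z := by rw [← h4, h3]
        exact add_eq_right.mp h5
      have e1 : E p z * E z z = E p z := by rw [EE]; simp
      have e2 : E z z * E z q = E z q := by rw [EE]; simp
      calc E p z * D (E z z) * E z q
          = (E p z * E z z) * D (E z z) * (E z z * E z q) := by rw [e1, e2]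
        _ = E p z * (E z z * D (E z z) * E z z) * E z q := by noncomm_ring
        _ = 0 := by rw [hX]; noncomm_ring
    have hEpq : E p z * E z q = E p q := by rw [EE]; simp
    have hle : D (E p q) = D (E p z) * E z q + E p z * D (E z q) := by
      rw [← hEpq, Dleib]
    rw [h1, h2, hzero, hle]
    noncomm_ring
  -- the corrected derivation
  set D' : Matrix (Fin n) (Fin n) R → Matrix (Fin n) (Fin n) R :=
    fun x => D x - (a * x - x * a) with hD'
  have D'add : ∀ x y, D' (x + y) = D' x + D' y := by
    intro x y
    simp only [hD', Dadd, mul_add, add_mul]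
    abel
  have D'smul : ∀ (c : ℂ) (x), D' (c • x) = c • D' x := by
    intro c x
    simp only [hD', Dsmul, Matrix.mul_smul, Matrix.smul_mul, smul_sub]
  have D'leib : ∀ x y, D' (x * y) = D' x * y + x * D' y := by
    intro x y
    simp only [hD', Dleib]
    noncomm_ring
  have D'0 : D' 0 = 0 := by simp [hD', D0]
  have D'E : ∀ p q : Fin n, D' (E p q) = 0 := by
    intro p q
    simp only [hD', key p q, sub_self]
  -- sandwich lemma
  have sandwich : ∀ (M : Matrix (Fin n) (Fin n) R) (i j : Fin n),
      single i i (1 : R) * M * single j j 1 = single i j (M i j) := by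
    intro M i j
    ext p q
    by_cases hq : q = j
    · subst hq
      rw [mul_single_apply_same]
      by_cases hp : p = i
      · subst hp
        rw [single_mul_apply_same, one_mul, mul_one, single_apply_same]
      · rw [single_mul_apply_of_ne (h := hp), zero_mul,
          single_apply_of_ne (h := fun h => hp h.1.symm)]
    · rw [mul_single_apply_of_ne (hbj := hq),
        single_apply_of_ne (h := fun h => hq h.2.symm)]
  have D'E' : ∀ p q : Fin n, D' (single p q (1 : R)) = 0 := by
    simpa only [hE] using D'E
  set δ : R → R := fun r => D' (single z z r) z z with hδ
  have hSz : ∀ r : R, D' (single z z r) = single z z (δ r) := by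
    intro r
    have h1 : single z z r
        = single z z (1 : R) * single z z r * single z z 1 := by
      rw [sandwich, single_apply_same]
    have h2 : D' (single z z (1 : R) * single z z r * single z z 1)
        = single z z (1 : R) * D' (single z z r) * single z z 1 := by
      rw [D'leib, D'leib, D'E']
      simp
    calc D' (single z z r)
        = D' (single z z (1 : R) * single z z r * single z z 1) := by
          rw [← h1]
      _ = single z z (1 : R) * D' (single z z r) * single z z 1 := h2
      _ = single z z (δ r) := by rw [sandwich]
  have hstd : ∀ (r : R) (p q : Fin n),
      D' (single p q r) = single p q (δ r) := by
    intro r p q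
    have h1 : single p q r
        = single p z (1 : R) * (single z z r * single z q 1) := by
      simp
    rw [h1, D'leib, D'E', D'leib, D'E', hSz]
    simp
  have δadd : ∀ f g : R, δ (f + g) = δ f + δ g := by
    intro f g
    show D' (single z z (f + g)) z z = _
    rw [single_add, D'add, Matrix.add_apply]
  have δsmul : ∀ (c : ℂ) (f : R), δ (c • f) = c • δ f := by
    intro c f
    show D' (single z z (c • f)) z z = _
    rw [← smul_single, D'smul, Matrix.smul_apply]
  have δleib : ∀ f g : R, δ (f * g) = δ f * g + f * δ g := by
    intro f g
    have h1 : single z z (f * g)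
        = single z z f * single z z g := by simp
    have h2 := congrArg (fun m => m z z)
      (by rw [h1, D'leib, hSz, hSz] :
        D' (single z z (f * g))
          = single z z (δ f) * single z z g
            + single z z f * single z z (δ g))
    simpa using h2
  have D'sum : ∀ {ι : Type} (s : Finset ι) (f : ι → Matrix (Fin n) (Fin n) R),
      D' (∑ i ∈ s, f i) = ∑ i ∈ s, D' (f i) := by
    intro ι s f
    induction s using Finset.cons_induction with
    | empty => simpa using D'0
    | cons i s hi ih => rw [Finset.sum_cons, Finset.sum_cons, D'add, ih]
  have main : ∀ x, D x = (a * x - x * a) + matrixEntrywise n δ x := by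
    intro x
    have hx : D' x = matrixEntrywise n δ x := by
      conv_lhs => rw [matrix_eq_sum_single x]
      rw [D'sum]
      have : ∀ i : Fin n, D' (∑ j : Fin n, single i j (x i j))
          = ∑ j : Fin n, single i j (δ (x i j)) := by
        intro i
        rw [D'sum]
        exact Finset.sum_congr rfl fun j _ => hstd _ i j
      rw [Finset.sum_congr rfl fun i _ => this i]
      exact (matrix_eq_sum_single (matrixEntrywise n δ x)).symm
    have : D' x = D x - (a * x - x * a) := rfl
    rw [this] at hx
    rw [← hx]
    abel
  refine ⟨a, δ, δadd, δsmul, δleib, main, ?_⟩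
  intro a' δ' h1' h2' h3' h4'
  have hδeq : δ' = δ := by
    funext r
    set x : Matrix (Fin n) (Fin n) R := Matrix.diagonal (fun _ => r) with hx
    have hc : ∀ b : Matrix (Fin n) (Fin n) R, b * x - x * b = 0 := by
      intro b
      have : b * x = x * b := by
        ext i j
        rw [hx, Matrix.mul_diagonal, Matrix.diagonal_mul, mul_comm]
      rw [this, sub_self]
    have heq := (h4' x).symm.trans (main x)
    rw [hc a', hc a, zero_add, zero_add] at heq
    have h5 := congrArg (fun m => m z z) heq
    simp only [matrixEntrywise, Matrix.of_apply] at h5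
    rw [hx] at h5
    simpa using h5
  refine ⟨hδeq, fun x => ?_⟩
  have heq := (h4' x).symm.trans (main x)
  rw [hδeq] at heq
  exact add_right_cancel heq

end Aux

section L0

variable {Ω : Type*} [MeasurableSpace Ω] {μ : Measure Ω}

/-- The commutative ring structure on `L⁰(Ω)`. -/
@[reducible]
noncomputable def l0CommRing : CommRing (Ω →ₘ[μ] ℂ) :=
  { (inferInstance : AddCommGroup (Ω →ₘ[μ] ℂ)),
    (inferInstance : CommMonoid (Ω →ₘ[μ] ℂ)) with
    left_distrib := fun f g h =>
      AEEqFun.induction_on₃ f g h fun f hf g hg h hh => by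
        simp only [AEEqFun.mk_add_mk, AEEqFun.mk_mul_mk, AEEqFun.mk_eq_mk]
        exact Filter.Eventually.of_forall fun x => mul_add (f x) (g x) (h x)
    right_distrib := fun f g h =>
      AEEqFun.induction_on₃ f g h fun f hf g hg h hh => by
        simp only [AEEqFun.mk_add_mk, AEEqFun.mk_mul_mk, AEEqFun.mk_eq_mk]
        exact Filter.Eventually.of_forall fun x => add_mul (f x) (g x) (h x)
    zero_mul := fun f =>
      AEEqFun.induction_on f fun f hf => by
        simp only [AEEqFun.zero_def, AEEqFun.mk_mul_mk, AEEqFun.mk_eq_mk]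
        exact Filter.Eventually.of_forall fun x => zero_mul (f x)
    mul_zero := fun f =>
      AEEqFun.induction_on f fun f hf => by
        simp only [AEEqFun.zero_def, AEEqFun.mk_mul_mk, AEEqFun.mk_eq_mk]
        exact Filter.Eventually.of_forall fun x => mul_zero (f x) }

theorem l0SMulCommClass : SMulCommClass ℂ (Ω →ₘ[μ] ℂ) (Ω →ₘ[μ] ℂ) := by
  constructor
  intro c f g
  refine AEEqFun.induction_on₂ f g fun f hf g hg => ?_
  show c • (AEEqFun.mk f hf * AEEqFun.mk g hg) = AEEqFun.mk f hf * (c • AEEqFun.mk g hg)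
  simp only [AEEqFun.mk_mul_mk, AEEqFun.smul_mk, AEEqFun.mk_eq_mk]
  exact Filter.Eventually.of_forall fun x => by
    show c • (f x * g x) = f x * (c • g x)
    simp [smul_eq_mul]; ring

theorem l0IsScalarTower : IsScalarTower ℂ (Ω →ₘ[μ] ℂ) (Ω →ₘ[μ] ℂ) := by
  constructor
  intro c f g
  refine AEEqFun.induction_on₂ f g fun f hf g hg => ?_
  show (c • AEEqFun.mk f hf) * AEEqFun.mk g hg = c • (AEEqFun.mk f hf * AEEqFun.mk g hg)
  simp only [AEEqFun.mk_mul_mk, AEEqFun.smul_mk, AEEqFun.mk_eq_mk]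
  exact Filter.Eventually.of_forall fun x => by
    show (c • f x) * g x = c • (f x * g x)
    simp [smul_eq_mul]; ring

end L0

/-- every ℂ-linear derivation `D` on `M_n(L⁰(Ω))` (≅ `LS(M) = S(M)` for a
homogeneous type I_n von Neumann algebra `M` with center `L^∞(Ω)`) decomposes as
`D = D_a + D_δ` with `D_a` inner (implemented by `a ∈ M_n(L⁰(Ω))`) and `D_δ` the entrywise
derivation induced by a ℂ-linear derivation `δ` on `L⁰(Ω)`; moreover `δ` and the map `D_a`
are uniquely determined by `D`. Here `L⁰(Ω)` is realized as the space `Ω →ₘ[μ] ℂ` of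
equivalence classes of measurable functions modulo equality μ-a.e. -/
theorem derivation_on_matrix_L0_decomposition
    {Ω : Type*} [MeasurableSpace Ω] (μ : Measure Ω) [SigmaFinite μ]
    (n : ℕ) (hn : 0 < n)
    (D : Matrix (Fin n) (Fin n) (Ω →ₘ[μ] ℂ) → Matrix (Fin n) (Fin n) (Ω →ₘ[μ] ℂ))
    (Dadd : ∀ x y, D (x + y) = D x + D y)
    (Dsmul : ∀ (c : ℂ) (x), D (c • x) = c • D x)
    (Dleib : ∀ x y, D (x * y) = D x * y + x * D y) :
    ∃ (a : Matrix (Fin n) (Fin n) (Ω →ₘ[μ] ℂ))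
      (δ : (Ω →ₘ[μ] ℂ) → (Ω →ₘ[μ] ℂ)),
      (∀ f g, δ (f + g) = δ f + δ g) ∧
      (∀ (c : ℂ) (f), δ (c • f) = c • δ f) ∧
      (∀ f g, δ (f * g) = δ f * g + f * δ g) ∧
      (∀ x, D x = (a * x - x * a) + matrixEntrywise n δ x) ∧
      (∀ (a' : Matrix (Fin n) (Fin n) (Ω →ₘ[μ] ℂ))
         (δ' : (Ω →ₘ[μ] ℂ) → (Ω →ₘ[μ] ℂ)),
        (∀ f g, δ' (f + g) = δ' f + δ' g) →
        (∀ (c : ℂ) (f), δ' (c • f) = c • δ' f) →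
        (∀ f g, δ' (f * g) = δ' f * g + f * δ' g) →
        (∀ x, D x = (a' * x - x * a') + matrixEntrywise n δ' x) →
        δ' = δ ∧ ∀ x, a' * x - x * a' = a * x - x * a) := by
  letI : CommRing (Ω →ₘ[μ] ℂ) := l0CommRing
  letI : SMulCommClass ℂ (Ω →ₘ[μ] ℂ) (Ω →ₘ[μ] ℂ) := l0SMulCommClass
  letI : IsScalarTower ℂ (Ω →ₘ[μ] ℂ) (Ω →ₘ[μ] ℂ) := l0IsScalarTower
  exact matrixDerivAux_decomp hn D Dadd Dsmul Dleib
end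

section
/- Let (Ω, Σ, μ) be a σ-finite measure space and δ a derivation on L^0(Ω). Let (A_k)_{k∈ℕ} be pairwise disjoint measurable subsets of Ω whose union is Ω, and let π_k ∈ L^0(Ω) denote the equivalence class of the indicator function of A_k. If λ ∈ L^0(Ω) and (λ_k)_{k∈ℕ} is a family in L^0(Ω) such that π_k·λ = π_k·λ_k for all k (i.e., λ = Σ_k π_k λ_k is the mixing of the family (λ_k) along the partition (π_k)), then π_k·δ(λ) = π_k·δ(λ_k) for all k (i.e., δ commutes with the mixing operation). -/
open MeasureTheory

private lemma aemul_add {Ω : Type*} [MeasurableSpace Ω] {μ : Measure Ω}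
    (a b c : Ω →ₘ[μ] ℂ) : a * (b + c) = a * b + a * c := by
  apply AEEqFun.ext
  filter_upwards [AEEqFun.coeFn_mul a (b + c), AEEqFun.coeFn_add b c,
    AEEqFun.coeFn_add (a * b) (a * c), AEEqFun.coeFn_mul a b, AEEqFun.coeFn_mul a c]
    with x h1 h2 h3 h4 h5
  simp only [h1, h3, Pi.mul_apply, Pi.add_apply, h2, h4, h5]
  ring

private lemma aemul_zero {Ω : Type*} [MeasurableSpace Ω] {μ : Measure Ω}
    (a : Ω →ₘ[μ] ℂ) : a * 0 = 0 := by
  apply AEEqFun.ext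
  filter_upwards [AEEqFun.coeFn_mul a 0, AEEqFun.coeFn_zero (μ := μ) (β := ℂ)]
    with x h1 h2
  rw [h1, Pi.mul_apply, h2, Pi.zero_apply, mul_zero]

/-- a derivation `δ` on `L⁰(Ω)` commutes with the mixing operation:
if `(A_k)` is a measurable partition of `Ω` with indicator classes `π_k`, and
`λ` is the mixing of the family `(λ_k)` along `(π_k)` (i.e. `π_k·λ = π_k·λ_k` for
all `k`), then `π_k·δ(λ) = π_k·δ(λ_k)` for all `k`. Here `L⁰(Ω)` is realized as
the space `Ω →ₘ[μ] ℂ` of classes of measurable functions modulo equality μ-a.e. -/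
theorem derivation_commutes_with_mixing
    {Ω : Type*} [MeasurableSpace Ω] (μ : Measure Ω) [SigmaFinite μ]
    (δ : (Ω →ₘ[μ] ℂ) → (Ω →ₘ[μ] ℂ))
    (hadd : ∀ f g, δ (f + g) = δ f + δ g)
    (hsmul : ∀ (c : ℂ) (f), δ (c • f) = c • δ f)
    (hleib : ∀ f g, δ (f * g) = δ f * g + f * δ g)
    (A : ℕ → Set Ω) (hAmeas : ∀ k, MeasurableSet (A k))
    (hdisj : Pairwise (Function.onFun Disjoint A))
    (hcover : (⋃ k, A k) = Set.univ)
    (π : ℕ → (Ω →ₘ[μ] ℂ))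
    (hπ : ∀ k, π k = AEEqFun.mk ((A k).indicator fun _ => (1 : ℂ))
        (aestronglyMeasurable_const.indicator (hAmeas k)))
    (lam : Ω →ₘ[μ] ℂ) (lams : ℕ → (Ω →ₘ[μ] ℂ))
    (hmix : ∀ k, π k * lam = π k * lams k) :
    ∀ k, π k * δ lam = π k * δ (lams k) := by
  intro k
  set e := π k with he
  -- e is idempotent
  have hidem : e * e = e := by
    rw [he, hπ k, AEEqFun.mk_mul_mk]
    congr 1
    funext x
    by_cases hx : x ∈ A k <;> simp [hx]
  -- e * δ e = 0
  have hzero : e * δ e = 0 := by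
    have h1 : δ e = δ e * e + e * δ e := by
      conv_lhs => rw [← hidem]
      exact hleib _ _
    have h2 : e * δ e = e * δ e + e * δ e := by
      calc e * δ e = e * (δ e * e + e * δ e) := by rw [← h1]
        _ = e * (δ e * e) + e * (e * δ e) := aemul_add _ _ _
        _ = (e * e) * δ e + (e * e) * δ e := by
            rw [mul_comm (δ e) e, ← mul_assoc]
        _ = e * δ e + e * δ e := by rw [hidem]
    have := add_left_cancel (a := e * δ e) (b := 0) (c := e * δ e)
      (by rw [add_zero, ← h2])
    exact this.symm
  -- apply δ to the mixing identity
  have h3 : δ e * lam + e * δ lam = δ e * lams k + e * δ (lams k) := by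
    rw [← hleib, ← hleib, hmix k]
  have h4 : e * (δ e * lam) + e * (e * δ lam)
      = e * (δ e * lams k) + e * (e * δ (lams k)) := by
    rw [← aemul_add, ← aemul_add, h3]
  have h5 : ∀ f : Ω →ₘ[μ] ℂ, e * (δ e * f) = 0 := by
    intro f
    calc e * (δ e * f) = (e * δ e) * f := (mul_assoc _ _ _).symm
      _ = 0 * f := by rw [hzero]
      _ = f * 0 := mul_comm _ _
      _ = 0 := aemul_zero f
  have h7 : e * (e * δ lam) = e * (e * δ (lams k)) := by
    rw [h5 lam, h5 (lams k), zero_add, zero_add] at h4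
    exact h4
  calc e * δ lam = (e * e) * δ lam := by rw [hidem]
    _ = e * (e * δ lam) := mul_assoc _ _ _
    _ = e * (e * δ (lams k)) := h7
    _ = (e * e) * δ (lams k) := (mul_assoc _ _ _).symm
    _ = e * δ (lams k) := by rw [hidem]
end

section
/- Let (Ω, Σ, μ) be a σ-finite measure space and δ a nonzero derivation on L^0(Ω). Then there exist a sequence (λ_n)_{n≥1} in L^0(Ω) with |λ_n| ≤ 1 μ-almost everywhere for every n, and a measurable set A ∈ Σ with μ(A) > 0, such that for every n ≥ 1 one has |δ(λ_n)(ω)| ≥ n for μ-almost every ω ∈ A. -/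
open MeasureTheory

section DerivAux

variable {Ω : Type*} [MeasurableSpace Ω] {μ : Measure Ω}

private lemma my_aef_mul_zero (x : Ω →ₘ[μ] ℂ) : x * 0 = 0 := by
  apply AEEqFun.ext
  filter_upwards [AEEqFun.coeFn_mul x 0, AEEqFun.coeFn_zero (β := ℂ) (μ := μ)] with ω h1 h2
  simp only [h1, Pi.mul_apply, h2, Pi.zero_apply, mul_zero]

private lemma my_aef_zero_mul (x : Ω →ₘ[μ] ℂ) : (0 : Ω →ₘ[μ] ℂ) * x = 0 := by
  rw [mul_comm]; exact my_aef_mul_zero x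

private lemma my_aef_mul_add (a b c : Ω →ₘ[μ] ℂ) : a * (b + c) = a * b + a * c := by
  apply AEEqFun.ext
  filter_upwards [AEEqFun.coeFn_mul a (b + c), AEEqFun.coeFn_add b c,
    AEEqFun.coeFn_add (a * b) (a * c), AEEqFun.coeFn_mul a b, AEEqFun.coeFn_mul a c]
    with ω h1 h2 h3 h4 h5
  simp only [h1, Pi.mul_apply, h2, Pi.add_apply, h3, h4, h5]
  ring

private lemma my_aef_const_coe (c : ℂ) : ⇑(c • (1 : Ω →ₘ[μ] ℂ)) =ᵐ[μ] fun _ => c := by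
  filter_upwards [AEEqFun.coeFn_smul c (1 : Ω →ₘ[μ] ℂ),
    AEEqFun.coeFn_one (β := ℂ) (μ := μ)] with ω h1 h2
  simp [h1, h2]

private lemma my_deriv_one (δ : (Ω →ₘ[μ] ℂ) → (Ω →ₘ[μ] ℂ))
    (hleib : ∀ f g, δ (f * g) = δ f * g + f * δ g) : δ 1 = 0 := by
  have h := hleib 1 1
  rw [mul_one, mul_one, one_mul] at h
  exact (left_eq_add.mp h)

private lemma my_deriv_const (δ : (Ω →ₘ[μ] ℂ) → (Ω →ₘ[μ] ℂ))
    (hsmul : ∀ (c : ℂ) (f), δ (c • f) = c • δ f)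
    (hleib : ∀ f g, δ (f * g) = δ f * g + f * δ g) (c : ℂ) :
    δ (c • (1 : Ω →ₘ[μ] ℂ)) = 0 := by
  rw [hsmul, my_deriv_one δ hleib]
  apply AEEqFun.ext
  filter_upwards [AEEqFun.coeFn_smul c (0 : Ω →ₘ[μ] ℂ),
    AEEqFun.coeFn_zero (β := ℂ) (μ := μ)] with ω h1 h2
  simp [h1, h2]

private lemma my_deriv_idem (δ : (Ω →ₘ[μ] ℂ) → (Ω →ₘ[μ] ℂ))
    (hleib : ∀ f g, δ (f * g) = δ f * g + f * δ g)
    (e : Ω →ₘ[μ] ℂ) (hee : e * e = e) : δ e = 0 := by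
  have h : δ e = δ e * e + e * δ e := by rw [← hleib, hee]
  have h2 : e * δ e = e * δ e + e * δ e := by
    calc e * δ e = e * (δ e * e + e * δ e) := by rw [← h]
    _ = e * (δ e * e) + e * (e * δ e) := my_aef_mul_add _ _ _
    _ = (e * e) * δ e + (e * e) * δ e := by rw [mul_comm (δ e) e, ← mul_assoc]
    _ = e * δ e + e * δ e := by rw [hee]
  have h3 : e * δ e = 0 := left_eq_add.mp h2
  rw [h, mul_comm (δ e) e, h3, add_zero]

private lemma my_deriv_sub (δ : (Ω →ₘ[μ] ℂ) → (Ω →ₘ[μ] ℂ))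
    (hadd : ∀ f g, δ (f + g) = δ f + δ g) (f g : Ω →ₘ[μ] ℂ) :
    δ (f - g) = δ f - δ g := by
  have h := hadd (f - g) g
  rw [sub_add_cancel] at h
  rw [h]; abel

end DerivAux

/-- for a nonzero derivation `δ` on `L⁰(Ω)` there exist a sequence
`(λ_n)` with `|λ_n| ≤ 1` a.e. for every `n`, and a measurable set `A` of positive
measure, such that `|δ(λ_n)| ≥ n` a.e. on `A` for all `n ≥ 1`. Here `L⁰(Ω)` is
realized as the space `Ω →ₘ[μ] ℂ` of classes of measurable functions modulo
equality μ-a.e. -/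
theorem nontrivial_derivation_unbounded
    {Ω : Type*} [MeasurableSpace Ω] (μ : Measure Ω) [SigmaFinite μ]
    (δ : (Ω →ₘ[μ] ℂ) → (Ω →ₘ[μ] ℂ))
    (hadd : ∀ f g, δ (f + g) = δ f + δ g)
    (hsmul : ∀ (c : ℂ) (f), δ (c • f) = c • δ f)
    (hleib : ∀ f g, δ (f * g) = δ f * g + f * δ g)
    (hne : δ ≠ 0) :
    ∃ (lam : ℕ → (Ω →ₘ[μ] ℂ)) (A : Set Ω), MeasurableSet A ∧ 0 < μ A ∧
      (∀ n : ℕ, ∀ᵐ ω ∂μ, ‖(lam n : Ω →ₘ[μ] ℂ) ω‖ ≤ 1) ∧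
      (∀ n : ℕ, 1 ≤ n → ∀ᵐ ω ∂μ, ω ∈ A → (n : ℝ) ≤ ‖(δ (lam n)) ω‖) := by
  classical
  -- get f with δ f ≠ 0
  obtain ⟨f, hf⟩ : ∃ f, δ f ≠ 0 := by
    by_contra h
    push_neg at h
    exact hne (funext h)
  -- measurable representatives
  have hfsm : AEStronglyMeasurable (⇑f) μ := f.aestronglyMeasurable
  have hgsm : AEStronglyMeasurable (⇑(δ f)) μ := (δ f).aestronglyMeasurable
  set f₀ : Ω → ℂ := hfsm.mk (⇑f) with hf₀def
  set g₀ : Ω → ℂ := hgsm.mk (⇑(δ f)) with hg₀def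
  have hf₀ : Measurable f₀ := hfsm.stronglyMeasurable_mk.measurable
  have hg₀ : Measurable g₀ := hgsm.stronglyMeasurable_mk.measurable
  have hfae : ⇑f =ᵐ[μ] f₀ := hfsm.ae_eq_mk
  have hgae : ⇑(δ f) =ᵐ[μ] g₀ := hgsm.ae_eq_mk
  -- find K with positive measure where ‖g₀‖ ≥ 1/(K+1)
  obtain ⟨K, hK⟩ : ∃ K : ℕ, μ {ω | 1 / ((K : ℝ) + 1) ≤ ‖g₀ ω‖} ≠ 0 := by
    by_contra h
    push_neg at h
    have hsub : {ω | g₀ ω ≠ 0} ⊆ ⋃ k : ℕ, {ω | 1 / ((k : ℝ) + 1) ≤ ‖g₀ ω‖} := by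
      intro ω hω
      have hpos : 0 < ‖g₀ ω‖ := norm_pos_iff.mpr hω
      obtain ⟨k, hk⟩ := exists_nat_one_div_lt hpos
      exact Set.mem_iUnion.mpr ⟨k, le_of_lt hk⟩
    have h0 : μ {ω | g₀ ω ≠ 0} = 0 :=
      le_antisymm (le_trans (measure_mono hsub) (le_of_eq (measure_iUnion_null h))) zero_le
    have hg0 : g₀ =ᵐ[μ] 0 := by
      rw [Filter.EventuallyEq, ae_iff]
      simpa using h0
    apply hf
    apply AEEqFun.ext
    calc ⇑(δ f) =ᵐ[μ] g₀ := hgae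
    _ =ᵐ[μ] 0 := hg0
    _ =ᵐ[μ] ⇑(0 : Ω →ₘ[μ] ℂ) := (AEEqFun.coeFn_zero (β := ℂ) (μ := μ)).symm
  set ε : ℝ := 1 / ((K : ℝ) + 1) with hεdef
  have hεpos : 0 < ε := by positivity
  set A : Set Ω := {ω | ε ≤ ‖g₀ ω‖} with hAdef
  have hAm : MeasurableSet A := measurableSet_le measurable_const hg₀.norm
  have hApos : 0 < μ A := pos_iff_ne_zero.mpr hK
  -- the mesh constants
  set M : ℕ → ℝ := fun n => ((2 * (n + 1) * (K + 1) : ℕ) : ℝ) with hMdef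
  have hMpos : ∀ n, 0 < M n := by
    intro n
    simp only [hMdef]
    positivity
  -- rounding map
  set R : ℕ → ℂ → ℂ := fun n z => ⟨(⌊M n * z.re⌋ : ℤ) / M n, (⌊M n * z.im⌋ : ℤ) / M n⟩
    with hRdef
  -- bound on rounding error
  have hround : ∀ n (z : ℂ), ‖z - R n z‖ ≤ 2 / M n := by
    intro n z
    have hM := hMpos n
    have key : ∀ x : ℝ, |x - (⌊M n * x⌋ : ℤ) / M n| ≤ 1 / M n := by
      intro x
      have h1 : ((⌊M n * x⌋ : ℤ) : ℝ) ≤ M n * x := Int.floor_le _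
      have h2 : M n * x < (⌊M n * x⌋ : ℤ) + 1 := Int.lt_floor_add_one _
      have hfl : ((⌊M n * x⌋ : ℤ) : ℝ) / M n ≤ x := by
        rw [div_le_iff₀ hM]; linarith [mul_comm x (M n) ▸ h1]
      have hfu : x < ((⌊M n * x⌋ : ℤ) : ℝ) / M n + 1 / M n := by
        rw [← add_div, lt_div_iff₀ hM]; linarith [mul_comm x (M n)]
      rw [abs_le]
      constructor
      · have : (0:ℝ) < 1 / M n := by positivity
        linarith
      · linarith
    have hre : |(z - R n z).re| ≤ 1 / M n := by
      simpa [Complex.sub_re, hRdef] using key z.re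
    have him : |(z - R n z).im| ≤ 1 / M n := by
      simpa [Complex.sub_im, hRdef] using key z.im
    calc ‖z - R n z‖ ≤ |(z - R n z).re| + |(z - R n z).im| := by
          exact Complex.norm_le_abs_re_add_abs_im _
    _ ≤ 1 / M n + 1 / M n := add_le_add hre him
    _ = 2 / M n := by ring
  -- the functions
  set h : ℕ → Ω → ℂ := fun n ω =>
    if ω ∈ A then (((M n / 2 : ℝ)) : ℂ) * (f₀ ω - R n (f₀ ω)) else 0 with hhdef
  have hhm : ∀ n, Measurable (h n) := by
    intro n
    apply Measurable.ite hAm _ measurable_const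
    apply Measurable.mul measurable_const
    apply Measurable.sub hf₀
    have : (fun a => R n (f₀ a)) = fun a =>
        ((((⌊M n * (f₀ a).re⌋ : ℤ) : ℝ) / M n : ℝ) : ℂ)
        + ((((⌊M n * (f₀ a).im⌋ : ℤ) : ℝ) / M n : ℝ) : ℂ) * Complex.I := by
      funext a
      rw [hRdef]
      exact (Complex.mk_eq_add_mul_I _ _)
    rw [this]
    apply Measurable.add
    · exact (Complex.measurable_ofReal.comp
        ((measurable_from_top.comp (measurable_const.mul (Complex.measurable_re.comp hf₀)).floor).div_const _))
    · exact ((Complex.measurable_ofReal.comp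
        ((measurable_from_top.comp (measurable_const.mul (Complex.measurable_im.comp hf₀)).floor).div_const _)).mul_const _)
  refine ⟨fun n => AEEqFun.mk (h n) (hhm n).aestronglyMeasurable, A, hAm, hApos, ?_, ?_⟩
  · -- boundedness
    intro n
    filter_upwards [AEEqFun.coeFn_mk (h n) (hhm n).aestronglyMeasurable] with ω hω
    rw [hω]
    by_cases hωA : ω ∈ A
    · simp only [hhdef, if_pos hωA]
      have hb := hround n (f₀ ω)
      have hM := hMpos n
      calc ‖(((M n / 2 : ℝ)) : ℂ) * (f₀ ω - R n (f₀ ω))‖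
          = (M n / 2) * ‖f₀ ω - R n (f₀ ω)‖ := by
            rw [norm_mul, Complex.norm_real, Real.norm_eq_abs, abs_of_nonneg (by positivity)]
      _ ≤ (M n / 2) * (2 / M n) := by
            apply mul_le_mul_of_nonneg_left hb (by positivity)
      _ = 1 := by field_simp
    · simp only [hhdef, if_neg hωA, norm_zero]
      exact zero_le_one
  · -- unboundedness on A
    intro n _hn
    set lam_n : Ω →ₘ[μ] ℂ := AEEqFun.mk (h n) (hhm n).aestronglyMeasurable with hlamdef
    have hlam_coe : ⇑lam_n =ᵐ[μ] h n := AEEqFun.coeFn_mk _ _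
    -- grid cells
    set E : ℤ × ℤ → Set Ω := fun q =>
      A ∩ {ω | ⌊M n * (f₀ ω).re⌋ = q.1 ∧ ⌊M n * (f₀ ω).im⌋ = q.2} with hEdef
    have hEm : ∀ q, MeasurableSet (E q) := by
      intro q
      apply hAm.inter
      have h1 : Measurable fun ω => ⌊M n * (f₀ ω).re⌋ :=
        (measurable_const.mul (Complex.measurable_re.comp hf₀)).floor
      have h2 : Measurable fun ω => ⌊M n * (f₀ ω).im⌋ :=
        (measurable_const.mul (Complex.measurable_im.comp hf₀)).floor
      exact (h1 (measurableSet_singleton q.1)).inter (h2 (measurableSet_singleton q.2))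
    set ind : ℤ × ℤ → Ω → ℂ := fun q => (E q).indicator (fun _ => (1:ℂ)) with hinddef
    have hindm : ∀ q, Measurable (ind q) := fun q => measurable_const.indicator (hEm q)
    set e : ℤ × ℤ → (Ω →ₘ[μ] ℂ) := fun q =>
      AEEqFun.mk (ind q) (hindm q).aestronglyMeasurable with hedef
    have he_coe : ∀ q, ⇑(e q) =ᵐ[μ] ind q := fun q => AEEqFun.coeFn_mk _ _
    set cq : ℤ × ℤ → ℂ := fun q => ⟨(q.1 : ℝ) / M n, (q.2 : ℝ) / M n⟩ with hcqdef
    set CM : Ω →ₘ[μ] ℂ := ((M n / 2 : ℝ) : ℂ) • (1 : Ω →ₘ[μ] ℂ) with hCMdef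
    set Ccq : ℤ × ℤ → (Ω →ₘ[μ] ℂ) := fun q => cq q • (1 : Ω →ₘ[μ] ℂ) with hCcqdef
    -- idempotents
    have P1 : ∀ q, e q * e q = e q := by
      intro q
      apply AEEqFun.ext
      filter_upwards [AEEqFun.coeFn_mul (e q) (e q), he_coe q] with ω h1 h2
      rw [h1, Pi.mul_apply, h2]
      simp only [hinddef, Set.indicator_apply]
      split_ifs <;> simp
    -- localization identity
    have P2 : ∀ q, lam_n * e q = CM * ((f - Ccq q) * e q) := by
      intro q
      apply AEEqFun.ext
      filter_upwards [AEEqFun.coeFn_mul lam_n (e q), he_coe q, hlam_coe,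
        AEEqFun.coeFn_mul CM ((f - Ccq q) * e q),
        my_aef_const_coe (μ := μ) (((M n / 2 : ℝ)) : ℂ),
        AEEqFun.coeFn_mul (f - Ccq q) (e q), AEEqFun.coeFn_sub f (Ccq q),
        my_aef_const_coe (μ := μ) (cq q), hfae] with ω h1 h2 h3 h4 h5 h6 h7 h8 h9
      rw [h1, Pi.mul_apply, h2, h3, h4, Pi.mul_apply, h5, h6, Pi.mul_apply, h7,
        Pi.sub_apply, h8, h9]
      rw [h2]
      by_cases hq : ω ∈ E q
      · have hωA : ω ∈ A := hq.1
        have hr : R n (f₀ ω) = cq q := by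
          apply Complex.ext
          · simp only [hRdef, hcqdef, hq.2.1]
          · simp only [hRdef, hcqdef, hq.2.2]
        simp only [hhdef, if_pos hωA, hinddef, Set.indicator_of_mem hq]
        rw [hr]
        ring
      · simp only [hinddef, Set.indicator_of_notMem hq, mul_zero]
    have he0 : ∀ q, δ (e q) = 0 := fun q => my_deriv_idem δ hleib (e q) (P1 q)
    have hCM0 : δ CM = 0 := my_deriv_const δ hsmul hleib _
    have hCcq0 : ∀ q, δ (Ccq q) = 0 := fun q => my_deriv_const δ hsmul hleib _
    have hdsub : ∀ q, δ (f - Ccq q) = δ f := by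
      intro q
      rw [my_deriv_sub δ hadd, hCcq0, sub_zero]
    have P3 : ∀ q, δ lam_n * e q = CM * (δ f * e q) := by
      intro q
      have s1 : δ (lam_n * e q) = δ lam_n * e q := by
        rw [hleib, he0, my_aef_mul_zero, add_zero]
      have s2 : δ (CM * ((f - Ccq q) * e q)) = CM * (δ f * e q) := by
        rw [hleib, hCM0, my_aef_zero_mul, zero_add, hleib, hdsub, he0,
          my_aef_mul_zero, add_zero]
      rw [← s1, P2 q, s2]
    have hae3 : ∀ q : ℤ × ℤ, ∀ᵐ ω ∂μ,
        (δ lam_n) ω * ind q ω = (((M n / 2 : ℝ)) : ℂ) * ((δ f) ω * ind q ω) := by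
      intro q
      filter_upwards [AEEqFun.coeFn_mul (δ lam_n) (e q),
        AEEqFun.coeFn_mul CM (δ f * e q), AEEqFun.coeFn_mul (δ f) (e q),
        he_coe q, my_aef_const_coe (μ := μ) (((M n / 2 : ℝ)) : ℂ)] with ω h1 h2 h3 h4 h5
      have h0 : ⇑(δ lam_n * e q) ω = ⇑(CM * (δ f * e q)) ω := by rw [P3 q]
      rw [h1, Pi.mul_apply, h4, h2, Pi.mul_apply, h5, h3, Pi.mul_apply, h4] at h0
      exact h0
    filter_upwards [hgae, ae_all_iff.mpr hae3] with ω hg hall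
    intro hωA
    have hεω : ε ≤ ‖g₀ ω‖ := hωA
    set q : ℤ × ℤ := (⌊M n * (f₀ ω).re⌋, ⌊M n * (f₀ ω).im⌋) with hqdef
    have hmem : ω ∈ E q := ⟨hωA, rfl, rfl⟩
    have h1 : ind q ω = 1 := by simp only [hinddef, Set.indicator_of_mem hmem]
    have h2 := hall q
    rw [h1, mul_one, mul_one, hg] at h2
    have hM := hMpos n
    have hMval : M n = 2 * ((n:ℝ) + 1) * ((K:ℝ) + 1) := by
      rw [hMdef]
      push_cast
      ring
    have hK1 : ((K:ℝ) + 1) ≠ 0 := by positivity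
    have harith : (M n / 2) * ε = (n:ℝ) + 1 := by
      rw [hMval, hεdef]
      field_simp
    calc (n:ℝ) ≤ (M n / 2) * ε := by rw [harith]; linarith
    _ ≤ (M n / 2) * ‖g₀ ω‖ := mul_le_mul_of_nonneg_left hεω (by positivity)
    _ = ‖(δ lam_n) ω‖ := by
        rw [h2, norm_mul, Complex.norm_real, Real.norm_eq_abs, abs_of_nonneg (by positivity)]
end

section
/- Let (Ω, Σ, μ) be a σ-finite measure space and δ a derivation on L^0(Ω). If the set {δ(λ) : λ ∈ L^0(Ω), |λ| ≤ 1 μ-a.e.} is order bounded in L^0(Ω), i.e., there exists g ∈ L^0(Ω) such that |δ(λ)| ≤ g μ-almost everywhere for every λ ∈ L^0(Ω) with |λ| ≤ 1 μ-almost everywhere, then δ is identically zero. -/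
open MeasureTheory

set_option maxHeartbeats 1000000 in
/-- if the image under a derivation `δ` on `L⁰(Ω)` of the unit ball
`{λ : |λ| ≤ 1 a.e.}` is order bounded (i.e. dominated a.e. by a fixed `g ∈ L⁰(Ω, ℝ)`),
then `δ = 0`. Here `L⁰(Ω)` is realized as the space `Ω →ₘ[μ] ℂ` of classes of
measurable functions modulo equality μ-a.e. -/
theorem derivation_order_bounded_on_ball_eq_zero
    {Ω : Type*} [MeasurableSpace Ω] (μ : Measure Ω) [SigmaFinite μ]
    (δ : (Ω →ₘ[μ] ℂ) → (Ω →ₘ[μ] ℂ))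
    (hadd : ∀ f g, δ (f + g) = δ f + δ g)
    (hsmul : ∀ (c : ℂ) (f), δ (c • f) = c • δ f)
    (hleib : ∀ f g, δ (f * g) = δ f * g + f * δ g)
    (hbound : ∃ g : Ω →ₘ[μ] ℝ, ∀ lam : Ω →ₘ[μ] ℂ,
      (∀ᵐ ω ∂μ, ‖lam ω‖ ≤ 1) → ∀ᵐ ω ∂μ, ‖(δ lam) ω‖ ≤ g ω) :
    δ = 0 := by
  classical
  obtain ⟨g, hg⟩ := hbound
  -- helper: extract a point of a positive-measure set satisfying an a.e. property
  have hpt : ∀ (s : Set Ω), μ s ≠ 0 → ∀ (p : Ω → Prop), (∀ᵐ ω ∂μ, p ω) → ∃ ω ∈ s, p ω := by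
    intro s hs p hp
    by_contra hc
    push_neg at hc
    exact hs (measure_mono_null (fun ω hω => hc ω hω) (ae_iff.mp hp))
  -- δ 1 = 0
  have h1 : δ 1 = 0 := by
    have h := hleib 1 1
    rw [mul_one, mul_one, one_mul] at h
    exact (left_eq_add.mp h)
  funext f
  simp only [Pi.zero_apply]
  by_contra hf
  set d : Ω →ₘ[μ] ℂ := δ f with hd
  have hdm : Measurable d := d.stronglyMeasurable.measurable
  have hfm : Measurable f := f.stronglyMeasurable.measurable
  have hgm : Measurable g := g.stronglyMeasurable.measurable
  -- the set where d ≠ 0 has positive measure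
  have hA : μ {ω | d ω ≠ 0} ≠ 0 := by
    intro h0
    apply hf
    apply AEEqFun.ext
    have hz : ⇑d =ᵐ[μ] (fun _ => (0:ℂ)) := ae_iff.mpr h0
    exact hz.trans (AEEqFun.coeFn_zero (β := ℂ) (μ := μ)).symm
  -- select a good set B
  set A : ℕ → Set Ω := fun n =>
    ({ω | 1/((n:ℝ)+1) ≤ ‖d ω‖} ∩ {ω | g ω ≤ (n:ℝ)+1}) ∩ {ω | ‖f ω‖ ≤ (n:ℝ)+1} with hA_def
  have hAmeas : ∀ n, MeasurableSet (A n) := fun n =>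
    ((measurableSet_le measurable_const hdm.norm).inter
      (measurableSet_le hgm measurable_const)).inter
      (measurableSet_le hfm.norm measurable_const)
  have hsub : {ω | d ω ≠ 0} ⊆ ⋃ n, A n := by
    intro ω hω
    obtain ⟨n1, hn1⟩ := exists_nat_one_div_lt (norm_pos_iff.mpr hω)
    obtain ⟨n2, hn2⟩ := exists_nat_ge (g ω)
    obtain ⟨n3, hn3⟩ := exists_nat_ge (‖f ω‖)
    refine Set.mem_iUnion.mpr ⟨n1 + n2 + n3, ⟨⟨?_, ?_⟩, ?_⟩⟩
    · refine le_trans ?_ hn1.le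
      apply one_div_le_one_div_of_le
      · positivity
      · push_cast; linarith [Nat.cast_nonneg (α := ℝ) n2, Nat.cast_nonneg (α := ℝ) n3]
    · refine le_trans hn2 ?_
      push_cast; linarith [Nat.cast_nonneg (α := ℝ) n1, Nat.cast_nonneg (α := ℝ) n3]
    · refine le_trans hn3 ?_
      push_cast; linarith [Nat.cast_nonneg (α := ℝ) n1, Nat.cast_nonneg (α := ℝ) n2]
  obtain ⟨j, hj⟩ : ∃ n, μ (A n) ≠ 0 := by
    by_contra hc
    push_neg at hc
    exact hA (measure_mono_null hsub (measure_iUnion_null hc))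
  set J : ℝ := (j:ℝ) + 1 with hJ
  have hJ1 : (1:ℝ) ≤ J := by
    rw [hJ]; linarith [Nat.cast_nonneg (α := ℝ) j]
  set B : Set Ω := A j with hB_def
  have hB : μ B ≠ 0 := hj
  have hBmeas : MeasurableSet B := hAmeas j
  have hBd : ∀ ω ∈ B, 1/J ≤ ‖d ω‖ := fun ω hω => hω.1.1
  have hBg : ∀ ω ∈ B, g ω ≤ J := fun ω hω => hω.1.2
  have hBf : ∀ ω ∈ B, ‖f ω‖ ≤ J := fun ω hω => hω.2
  -- the shifted function F = f + 2J
  set Fr : Ω → ℂ := fun ω => f ω + ((2*J:ℝ):ℂ) with hFr_def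
  have hFrm : Measurable Fr := hfm.add_const _
  set F : Ω →ₘ[μ] ℂ := f + ((2*J:ℝ):ℂ) • 1 with hF
  have hδF : δ F = d := by
    have hz : ((2*J:ℝ):ℂ) • (0 : Ω →ₘ[μ] ℂ) = 0 := by
      apply AEEqFun.ext
      filter_upwards [AEEqFun.coeFn_smul ((2*J:ℝ):ℂ) (0 : Ω →ₘ[μ] ℂ),
        AEEqFun.coeFn_zero (β := ℂ) (μ := μ)] with ω ha hb
      rw [ha, Pi.smul_apply, hb, Pi.zero_apply, smul_zero]
    rw [hF, hadd, hsmul, h1, hd, hz, add_zero]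
  have hFcoe : ⇑F =ᵐ[μ] Fr := by
    filter_upwards [AEEqFun.coeFn_add f (((2*J:ℝ):ℂ) • 1),
      AEEqFun.coeFn_smul ((2*J:ℝ):ℂ) (1 : Ω →ₘ[μ] ℂ),
      AEEqFun.coeFn_one (β := ℂ) (μ := μ)] with ω ha hb hc
    rw [hF]
    simp only [ha, Pi.add_apply, hb, Pi.smul_apply, hc, Pi.one_apply, smul_eq_mul, mul_one,
      hFr_def]
  have hnorm2J : ‖((2*J:ℝ):ℂ)‖ = 2*J := by
    rw [Complex.norm_real, Real.norm_eq_abs, abs_of_pos (by linarith)]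
  have hFr_lb : ∀ ω ∈ B, J ≤ ‖Fr ω‖ := by
    intro ω hω
    have h2 : ‖((2*J:ℝ):ℂ)‖ ≤ ‖Fr ω‖ + ‖f ω‖ := by
      calc ‖((2*J:ℝ):ℂ)‖ = ‖Fr ω + (-(f ω))‖ := by rw [hFr_def]; ring_nf
        _ ≤ ‖Fr ω‖ + ‖-(f ω)‖ := norm_add_le _ _
        _ = ‖Fr ω‖ + ‖f ω‖ := by rw [norm_neg]
    rw [hnorm2J] at h2
    linarith [hBf ω hω]
  have hFr_ub : ∀ ω ∈ B, ‖Fr ω‖ ≤ 3*J := by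
    intro ω hω
    calc ‖Fr ω‖ ≤ ‖f ω‖ + ‖((2*J:ℝ):ℂ)‖ := norm_add_le _ _
      _ ≤ J + 2*J := by rw [hnorm2J]; linarith [hBf ω hω]
      _ = 3*J := by ring
  have hFrne : ∀ ω ∈ B, Fr ω ≠ 0 := by
    intro ω hω h0
    have := hFr_lb ω hω
    rw [h0, norm_zero] at this
    linarith
  -- essential infimum c of ‖Fr‖ on B
  set S : Set ℝ := {a | ∀ᵐ ω ∂μ, ω ∈ B → a ≤ ‖Fr ω‖} with hS
  have hJS : J ∈ S := ae_of_all μ (fun ω hω => hFr_lb ω hω)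
  have hSne : S.Nonempty := ⟨J, hJS⟩
  have hSbdd : BddAbove S := by
    refine ⟨3*J, fun a ha => ?_⟩
    obtain ⟨ω, hωB, hω⟩ := hpt B hB _ ha
    exact le_trans (hω hωB) (hFr_ub ω hωB)
  set c : ℝ := sSup S with hc_def
  have hcJ : J ≤ c := le_csSup hSbdd hJS
  have hc3J : c ≤ 3*J := csSup_le hSne (fun a ha => by
    obtain ⟨ω, hωB, hω⟩ := hpt B hB _ ha
    exact le_trans (hω hωB) (hFr_ub ω hωB))
  have hc0 : 0 < c := lt_of_lt_of_le (by linarith) hcJ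
  have hcS : ∀ᵐ ω ∂μ, ω ∈ B → c ≤ ‖Fr ω‖ := by
    have hall : ∀ᵐ ω ∂μ, ∀ m : ℕ, ω ∈ B → c - 1/((m:ℝ)+1) ≤ ‖Fr ω‖ := by
      rw [ae_all_iff]
      intro m
      obtain ⟨a, haS, ha⟩ := exists_lt_of_lt_csSup hSne
        (show c - 1/((m:ℝ)+1) < c by
          have : (0:ℝ) < 1/((m:ℝ)+1) := by positivity
          linarith)
      filter_upwards [haS] with ω h hωB
      linarith [h hωB]
    filter_upwards [hall] with ω h hωB
    by_contra hlt
    push_neg at hlt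
    obtain ⟨m, hm⟩ := exists_nat_one_div_lt (show (0:ℝ) < c - ‖Fr ω‖ by linarith)
    linarith [h m hωB]
  have hBeta : ∀ η : ℝ, 0 < η → μ (B ∩ {ω | ‖Fr ω‖ < c + η}) ≠ 0 := by
    intro η hη h0
    have hmem : c + η ∈ S := by
      rw [hS, Set.mem_setOf_eq, ae_iff]
      have hset : {ω | ¬(ω ∈ B → c + η ≤ ‖Fr ω‖)} = B ∩ {ω | ‖Fr ω‖ < c + η} := by
        ext ω
        simp only [Set.mem_setOf_eq, Set.mem_inter_iff, Classical.not_imp, not_le]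
      rw [hset]
      exact h0
    have := le_csSup hSbdd hmem
    linarith
  -- the indicator of B
  set eB : Ω → ℂ := B.indicator (fun _ => 1) with heB
  set χ : Ω →ₘ[μ] ℂ := AEEqFun.mk eB ((measurable_one.indicator hBmeas).aestronglyMeasurable)
    with hχ_def
  have hχcoe : ⇑χ =ᵐ[μ] eB := AEEqFun.coeFn_mk _ _
  have hχχ : χ * χ = χ := by
    apply AEEqFun.ext
    filter_upwards [AEEqFun.coeFn_mul χ χ, hχcoe] with ω ha hb
    rw [ha, Pi.mul_apply, hb]
    by_cases hω : ω ∈ B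
    · simp only [heB, Set.indicator_of_mem hω, mul_one]
    · simp only [heB, Set.indicator_of_notMem hω, mul_zero]
  have hδχ : δ χ = 0 := by
    have h2 : δ χ = δ χ * χ + χ * δ χ := by
      nth_rewrite 1 [← hχχ]
      exact hleib χ χ
    apply AEEqFun.ext
    have h2c : ⇑(δ χ) = ⇑(δ χ * χ + χ * δ χ) := by rw [← h2]
    filter_upwards [AEEqFun.coeFn_add (δ χ * χ) (χ * δ χ), AEEqFun.coeFn_mul (δ χ) χ,
      AEEqFun.coeFn_mul χ (δ χ), hχcoe, AEEqFun.coeFn_zero (β := ℂ) (μ := μ)]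
      with ω ha hb hc hd hz
    rw [hz, Pi.zero_apply]
    have hE : δ χ ω = δ χ ω * eB ω + eB ω * δ χ ω := by
      conv_lhs => rw [h2c]
      rw [ha, Pi.add_apply, hb, hc, Pi.mul_apply, Pi.mul_apply, hd]
    by_cases hω : ω ∈ B
    · simp only [heB, Set.indicator_of_mem hω, mul_one, one_mul] at hE
      exact left_eq_add.mp hE
    · simp only [heB, Set.indicator_of_notMem hω, mul_zero, zero_mul, add_zero] at hE
      exact hE
  -- the "inverse on B" function v
  set vf : Ω → ℂ := B.indicator (fun ω => (Fr ω)⁻¹) with hvf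
  have hvfm : Measurable vf := (hFrm.inv).indicator hBmeas
  set v : Ω →ₘ[μ] ℂ := AEEqFun.mk vf hvfm.aestronglyMeasurable with hv_def
  have hvcoe : ⇑v =ᵐ[μ] vf := AEEqFun.coeFn_mk _ _
  have hvF : v * F = χ := by
    apply AEEqFun.ext
    filter_upwards [AEEqFun.coeFn_mul v F, hvcoe, hFcoe, hχcoe] with ω ha hb hc hd
    rw [ha, Pi.mul_apply, hb, hc, hd]
    by_cases hω : ω ∈ B
    · simp only [hvf, heB, Set.indicator_of_mem hω]
      exact inv_mul_cancel₀ (hFrne ω hω)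
    · simp only [hvf, heB, Set.indicator_of_notMem hω, zero_mul]
  have hvχ : v * χ = v := by
    apply AEEqFun.ext
    filter_upwards [AEEqFun.coeFn_mul v χ, hvcoe, hχcoe] with ω ha hb hc
    rw [ha, Pi.mul_apply, hb, hc]
    by_cases hω : ω ∈ B
    · simp only [heB, Set.indicator_of_mem hω, mul_one]
    · simp only [hvf, heB, Set.indicator_of_notMem hω, mul_zero]
  have hδv_eq : δ v * F + v * d = 0 := by
    have h := hleib v F
    rw [hvF, hδχ, hδF] at h
    exact h.symm
  have hmulzero : ∀ w : Ω →ₘ[μ] ℂ, w * 0 = 0 := by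
    intro w
    apply AEEqFun.ext
    filter_upwards [AEEqFun.coeFn_mul w 0, AEEqFun.coeFn_zero (β := ℂ) (μ := μ)] with ω ha hb
    rw [ha, Pi.mul_apply, hb, Pi.zero_apply, mul_zero]
  have hδvχ : δ v = δ v * χ := by
    nth_rewrite 1 [← hvχ]
    rw [hleib, hδχ, hmulzero, add_zero]
  -- pointwise formula for δ v
  have hδv : ⇑(δ v) =ᵐ[μ] fun ω => -((vf ω)^2 * d ω) := by
    have hcoe0 : ⇑(δ v * F + v * d) = ⇑(0 : Ω →ₘ[μ] ℂ) := by rw [hδv_eq]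
    have hcoeχ : ⇑(δ v) = ⇑(δ v * χ) := by rw [← hδvχ]
    filter_upwards [AEEqFun.coeFn_add (δ v * F) (v * d), AEEqFun.coeFn_mul (δ v) F,
      AEEqFun.coeFn_mul v d, hvcoe, hFcoe, AEEqFun.coeFn_zero (β := ℂ) (μ := μ),
      AEEqFun.coeFn_mul (δ v) χ, hχcoe] with ω ha hb hc hd he hz hm hx
    have hE : δ v ω * Fr ω + vf ω * d ω = 0 := by
      have h9 := congrFun hcoe0 ω
      simp only [ha, Pi.add_apply, hb, hc, Pi.mul_apply, hd, he, hz, Pi.zero_apply] at h9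
      exact h9
    have hEχ : δ v ω = δ v ω * eB ω := by
      have h9 := congrFun hcoeχ ω
      simp only [hm, Pi.mul_apply, hx] at h9
      exact h9
    by_cases hω : ω ∈ B
    · have hvfω : vf ω = (Fr ω)⁻¹ := Set.indicator_of_mem hω _
      have hne := hFrne ω hω
      rw [hvfω] at hE ⊢
      have h7 : δ v ω * Fr ω = -((Fr ω)⁻¹ * d ω) := eq_neg_of_add_eq_zero_left hE
      have h8 : δ v ω = -((Fr ω)⁻¹ * d ω) * (Fr ω)⁻¹ := by
        have h9 := congrArg (fun z => z * (Fr ω)⁻¹) h7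
        simpa [mul_assoc, mul_inv_cancel₀ hne] using h9
      rw [h8]; ring
    · have hvfω : vf ω = 0 := Set.indicator_of_notMem hω _
      rw [hEχ, heB, Set.indicator_of_notMem hω, mul_zero, hvfω]
      ring
  -- pointwise formula for δ (v ^ (m+1))
  have hδvk : ∀ m : ℕ, ⇑(δ (v^(m+1))) =ᵐ[μ] fun ω => -(((m:ℂ)+1) * (vf ω)^(m+2) * d ω) := by
    intro m
    induction m with
    | zero =>
      rw [pow_one]
      filter_upwards [hδv] with ω h
      rw [h]; push_cast; ring_nf
    | succ n ih =>
      have hpow : v^(n+1+1) = v * v^(n+1) := by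
        rw [pow_succ, mul_comm]
      rw [hpow, hleib]
      filter_upwards [AEEqFun.coeFn_add (δ v * v^(n+1)) (v * δ (v^(n+1))),
        AEEqFun.coeFn_mul (δ v) (v^(n+1)), AEEqFun.coeFn_mul v (δ (v^(n+1))),
        hδv, ih, hvcoe, AEEqFun.coeFn_pow v (n+1)] with ω ha hb hc h1' h2' h3' h4'
      simp only [ha, Pi.add_apply, hb, hc, Pi.mul_apply, h1', h2', h3', h4', Pi.pow_apply]
      push_cast
      ring
  -- the test functions
  set m : ℕ := 3 * (j+1)^3 with hm_def
  set lam : Ω →ₘ[μ] ℂ := (((c:ℝ):ℂ)^(m+1)) • v^(m+1) with hlam_def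
  have hlamcoe : ⇑lam =ᵐ[μ] fun ω => ((c:ℂ))^(m+1) * (vf ω)^(m+1) := by
    filter_upwards [AEEqFun.coeFn_smul (((c:ℝ):ℂ)^(m+1)) (v^(m+1)),
      AEEqFun.coeFn_pow v (m+1), hvcoe] with ω ha hb hc
    rw [hlam_def]
    simp only [ha, Pi.smul_apply, hb, Pi.pow_apply, hc, smul_eq_mul]
  have hlam1 : ∀ᵐ ω ∂μ, ‖lam ω‖ ≤ 1 := by
    filter_upwards [hlamcoe, hcS] with ω ha hb
    rw [ha]
    by_cases hω : ω ∈ B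
    · have hvfω : vf ω = (Fr ω)⁻¹ := Set.indicator_of_mem hω _
      have hcle : c ≤ ‖Fr ω‖ := hb hω
      have hFpos : 0 < ‖Fr ω‖ := lt_of_lt_of_le hc0 hcle
      rw [norm_mul, norm_pow, norm_pow, hvfω, norm_inv, Complex.norm_real,
        Real.norm_eq_abs, abs_of_pos hc0, ← mul_pow]
      apply pow_le_one₀
      · positivity
      · rw [mul_inv_le_iff₀ hFpos, one_mul]
        exact hcle
    · have hvfω : vf ω = 0 := Set.indicator_of_notMem hω _
      rw [hvfω, zero_pow (by omega : m + 1 ≠ 0), mul_zero, norm_zero]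
      norm_num
  have hδlam : ∀ᵐ ω ∂μ, ‖(δ lam) ω‖ ≤ g ω := hg lam hlam1
  have hδlamcoe : ⇑(δ lam) =ᵐ[μ]
      fun ω => ((c:ℂ))^(m+1) * (-(((m:ℂ)+1) * (vf ω)^(m+2) * d ω)) := by
    have hs : δ lam = (((c:ℝ):ℂ)^(m+1)) • δ (v^(m+1)) := by rw [hlam_def, hsmul]
    rw [hs]
    filter_upwards [AEEqFun.coeFn_smul (((c:ℝ):ℂ)^(m+1)) (δ (v^(m+1))), hδvk m] with ω ha hb
    simp only [ha, Pi.smul_apply, hb, smul_eq_mul]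
  -- the key numerical inequality
  have hJpos : (0:ℝ) < J := by linarith
  have key : ∀ η : ℝ, 0 < η → ((m:ℝ)+1) * c^(m+1) ≤ J^2 * (c+η)^(m+2) := by
    intro η hη
    obtain ⟨ω, hωmem, hωp⟩ := hpt (B ∩ {ω | ‖Fr ω‖ < c + η}) (hBeta η hη) _
      ((hδlam.and hδlamcoe).and hcS)
    obtain ⟨⟨hb1, hb2⟩, hb3⟩ := hωp
    obtain ⟨hωB, hωlt⟩ := hωmem
    have hcle : c ≤ ‖Fr ω‖ := hb3 hωB
    have hFpos : 0 < ‖Fr ω‖ := lt_of_lt_of_le hc0 hcle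
    have hcη : (0:ℝ) < c + η := by linarith
    have hvfω : vf ω = (Fr ω)⁻¹ := Set.indicator_of_mem hωB _
    have hnorm : ‖(δ lam) ω‖ = c^(m+1) * (((m:ℝ)+1) * (‖Fr ω‖⁻¹)^(m+2) * ‖d ω‖) := by
      rw [hb2, norm_mul, norm_neg, norm_mul, norm_mul, norm_pow, norm_pow, hvfω, norm_inv]
      have hm1 : ((m:ℂ)+1) = (((m:ℝ)+1 : ℝ):ℂ) := by push_cast; ring
      rw [hm1]
      simp only [Complex.norm_real, Real.norm_eq_abs]
      rw [abs_of_pos hc0, abs_of_pos (show (0:ℝ) < (m:ℝ)+1 by positivity)]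
      try ring
    have hgJ : g ω ≤ J := hBg ω hωB
    have hdlb : 1/J ≤ ‖d ω‖ := hBd ω hωB
    have hlow : c^(m+1) * (((m:ℝ)+1) * ((c+η)⁻¹)^(m+2) * (1/J)) ≤ ‖(δ lam) ω‖ := by
      rw [hnorm]
      have hinv : (c+η)⁻¹ ≤ ‖Fr ω‖⁻¹ := by
        apply inv_anti₀ hFpos hωlt.le
      gcongr <;> first
        | positivity
        | exact hinv
        | exact hdlb
    have h3 : c^(m+1) * (((m:ℝ)+1) * ((c+η)⁻¹)^(m+2) * (1/J)) ≤ J :=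
      le_trans hlow (le_trans hb1 hgJ)
    have hX : (0:ℝ) < (c+η)^(m+2) := by positivity
    have h4 := mul_le_mul_of_nonneg_right h3 (le_of_lt (mul_pos hJpos hX))
    have h5 : ((m:ℝ)+1) * c^(m+1)
        = c^(m+1) * (((m:ℝ)+1) * ((c+η)⁻¹)^(m+2) * (1/J)) * (J * (c+η)^(m+2)) := by
      have hJne : J ≠ 0 := ne_of_gt hJpos
      have hcηne : (c+η) ≠ 0 := ne_of_gt hcη
      have e1 : ((c+η)⁻¹)^(m+2) * (c+η)^(m+2) = 1 := by
        rw [← mul_pow, inv_mul_cancel₀ hcηne, one_pow]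
      rw [show c^(m+1) * (((m:ℝ)+1) * ((c+η)⁻¹)^(m+2) * (1/J)) * (J * (c+η)^(m+2))
          = ((m:ℝ)+1) * c^(m+1) * (((c+η)⁻¹)^(m+2) * (c+η)^(m+2)) * ((1/J) * J) by ring,
        e1, one_div_mul_cancel hJne]
      ring
    calc ((m:ℝ)+1) * c^(m+1)
        = c^(m+1) * (((m:ℝ)+1) * ((c+η)⁻¹)^(m+2) * (1/J)) * (J * (c+η)^(m+2)) := h5
      _ ≤ J * (J * (c+η)^(m+2)) := h4
      _ = J^2 * (c+η)^(m+2) := by ring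
  -- pass to the limit η → 0⁺
  have hlim : ((m:ℝ)+1) * c^(m+1) ≤ J^2 * c^(m+2) := by
    have hcont : Continuous fun η : ℝ => J^2 * (c+η)^(m+2) :=
      continuous_const.mul ((continuous_const.add continuous_id).pow _)
    have ht : Filter.Tendsto (fun η : ℝ => J^2 * (c+η)^(m+2)) (nhdsWithin 0 (Set.Ioi 0))
        (nhds (J^2 * c^(m+2))) := by
      have h0 := hcont.tendsto 0
      simp only [add_zero] at h0
      exact h0.mono_left nhdsWithin_le_nhds
    exact ge_of_tendsto ht (Filter.eventually_of_mem self_mem_nhdsWithin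
      (fun η hη => key η hη))
  -- derive contradiction
  have hck : (0:ℝ) < c^(m+1) := pow_pos hc0 (m+1)
  have hkle : ((m:ℝ)+1) ≤ J^2 * c := by
    have h6 : ((m:ℝ)+1) * c^(m+1) ≤ (J^2 * c) * c^(m+1) := by
      calc ((m:ℝ)+1) * c^(m+1) ≤ J^2 * c^(m+2) := hlim
        _ = (J^2 * c) * c^(m+1) := by rw [pow_succ]; ring
    exact le_of_mul_le_mul_right h6 hck
  have hmval : ((m:ℝ)+1) = 3*J^3 + 1 := by
    rw [hm_def, hJ]
    push_cast
    ring
  nlinarith [mul_le_mul_of_nonneg_left hc3J (le_of_lt (mul_pos hJpos hJpos))]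
end

section
/- Let (Ω, Σ, μ) be a σ-finite measure space and δ a derivation on L^0(Ω). If δ(λ) = 0 for every essentially bounded element λ ∈ L^0(Ω) (i.e., every λ admitting a μ-essentially bounded representative), then δ = 0 on all of L^0(Ω). -/
open MeasureTheory

/-- if a derivation `δ` on `L⁰(Ω)` vanishes on every essentially
bounded element, then `δ = 0` on all of `L⁰(Ω)`. Here `L⁰(Ω)` is realized as the
space `Ω →ₘ[μ] ℂ` of classes of measurable functions modulo equality μ-a.e. -/
theorem derivation_vanishing_on_bounded_eq_zero
    {Ω : Type*} [MeasurableSpace Ω] (μ : Measure Ω) [SigmaFinite μ]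
    (δ : (Ω →ₘ[μ] ℂ) → (Ω →ₘ[μ] ℂ))
    (hadd : ∀ f g, δ (f + g) = δ f + δ g)
    (hsmul : ∀ (c : ℂ) (f), δ (c • f) = c • δ f)
    (hleib : ∀ f g, δ (f * g) = δ f * g + f * δ g)
    (hbdd : ∀ lam : Ω →ₘ[μ] ℂ, (∃ C : ℝ, ∀ᵐ ω ∂μ, ‖lam ω‖ ≤ C) → δ lam = 0) :
    δ = 0 := by
  classical
  funext f
  -- a strongly measurable representative of f
  set g : Ω → ℂ := f.aestronglyMeasurable.mk f with hg
  have hgm : StronglyMeasurable g := f.aestronglyMeasurable.stronglyMeasurable_mk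
  have hfg : (f : Ω → ℂ) =ᵐ[μ] g := f.aestronglyMeasurable.ae_eq_mk
  -- indicator functions e n of {‖g‖ ≤ n}
  have hindm : ∀ n : ℕ, Measurable (fun ω => if ‖g ω‖ ≤ (n : ℝ) then (1 : ℂ) else 0) := by
    intro n
    exact Measurable.ite (measurableSet_le hgm.measurable.norm measurable_const)
      measurable_const measurable_const
  set e : ℕ → (Ω →ₘ[μ] ℂ) := fun n =>
    AEEqFun.mk (fun ω => if ‖g ω‖ ≤ (n : ℝ) then (1 : ℂ) else 0)
      (hindm n).aestronglyMeasurable with he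
  have hecoe : ∀ n : ℕ, (e n : Ω → ℂ) =ᵐ[μ]
      fun ω => if ‖g ω‖ ≤ (n : ℝ) then (1 : ℂ) else 0 := fun n => AEEqFun.coeFn_mk _ _
  -- δ (e n) = 0
  have hde : ∀ n : ℕ, δ (e n) = 0 := by
    intro n
    refine hbdd _ ⟨1, ?_⟩
    filter_upwards [hecoe n] with ω hω
    rw [hω]
    split_ifs <;> simp
  -- f * e n is bounded, hence δ (f * e n) = 0
  have hdfe : ∀ n : ℕ, δ (f * e n) = 0 := by
    intro n
    refine hbdd _ ⟨n, ?_⟩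
    filter_upwards [AEEqFun.coeFn_mul f (e n), hecoe n, hfg] with ω h1 h2 h3
    rw [h1, Pi.mul_apply, h2, h3]
    split_ifs with h
    · simpa using h
    · simp [Nat.cast_nonneg]
  -- hence δ f * e n = 0
  have key : ∀ n : ℕ, δ f * e n = 0 := by
    intro n
    have h0 : f * (0 : Ω →ₘ[μ] ℂ) = 0 := by
      apply AEEqFun.ext
      filter_upwards [AEEqFun.coeFn_mul f 0, AEEqFun.coeFn_zero (μ := μ) (β := ℂ)] with ω h1 h2
      simp [h1, Pi.mul_apply, h2]
    have := hleib f (e n)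
    rw [hdfe n, hde n, h0, add_zero] at this
    exact this.symm
  -- conclude δ f = 0 a.e.
  have : (δ f : Ω → ℂ) =ᵐ[μ] 0 := by
    have hkey : ∀ᵐ ω ∂μ, ∀ n : ℕ, (δ f) ω * (if ‖g ω‖ ≤ (n : ℝ) then (1 : ℂ) else 0) = 0 := by
      rw [ae_all_iff]
      intro n
      have h1 : ((δ f * e n : Ω →ₘ[μ] ℂ) : Ω → ℂ) =ᵐ[μ] 0 := by
        rw [key n]; exact AEEqFun.coeFn_zero
      filter_upwards [AEEqFun.coeFn_mul (δ f) (e n), hecoe n, h1] with ω ha hb hc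
      rw [← hb, ← Pi.mul_apply, ← ha, hc, Pi.zero_apply]
    filter_upwards [hkey] with ω hω
    obtain ⟨n, hn⟩ := exists_nat_ge ‖g ω‖
    have := hω n
    rw [if_pos hn, mul_one] at this
    simpa using this
  apply AEEqFun.ext
  exact this.trans (AEEqFun.coeFn_zero (μ := μ) (β := ℂ)).symm
end
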